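/- arXiv:1706.00809 — 2 statements merged into one kernel-verified Lean document; each statement's English description precedes it below -/
import Mathlib

section
/- Let E be a Banach space satisfying the B-condition with exponent p ∈ (1,∞), let q be the conjugate exponent (1/p + 1/q = 1), and let {e_j, f_j} be a biorthonormal basis system in E × E*. If A ∈ σ_p(E) and B ∈ σ_q(E), then the series ∑_{i=1}^∞ ⟨A e_i, B* f_i⟩ converges absolutely and |∑_{i=1}^∞ ⟨A e_i, B* f_i⟩| ≤ ‖A‖_{σ_p(E)} ‖B*‖_{σ_q(E*)}. -/
/-- Hölder estimate for the trace pairing: if `A ∈ σ_p(E)`, `B ∈ σ_q(E)`,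
`1/p + 1/q = 1`, then `∑ ⟨A e_i, B* f_i⟩` converges absolutely and is bounded by
`‖A‖_{σ_p} ‖B*‖_{σ_q}`. Here `⟨A e_i, B* f_i⟩ = f_i (B (A e_i))`. -/
theorem stmt4 {E : Type*} [NormedAddCommGroup E] [NormedSpace ℂ E]
    (e : ℕ → E) (f : ℕ → StrongDual ℂ E)
    (hbi : ∀ i j, f i (e j) = if i = j then 1 else 0)
    (hne : ∀ j, ‖e j‖ = 1) (hnf : ∀ j, ‖f j‖ = 1)
    (p q C : ℝ) (hp : 1 < p) (hq : 1 < q) (hpq : 1 / p + 1 / q = 1) (hC : 0 < C)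
    -- B-condition:
    (hexp : ∀ (u : E) (g : StrongDual ℂ E),
      HasSum (fun j => f j u * g (e j)) (g u))
    (hBcond : ∀ u : E, ‖u‖ ^ p ≤ C * ∑' j, ‖f j u‖ ^ p)
    (A B : E →L[ℂ] E)
    (hA : Summable fun ij : ℕ × ℕ => ‖f ij.2 (A (e ij.1))‖ ^ p)
    (hB : Summable fun ij : ℕ × ℕ => ‖f ij.2 (B (e ij.1))‖ ^ q) :
    Summable (fun i => ‖f i (B (A (e i)))‖) ∧
      ‖∑' i, f i (B (A (e i)))‖ ≤
        (∑' ij : ℕ × ℕ, ‖f ij.2 (A (e ij.1))‖ ^ p) ^ (1 / p) *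
          (∑' ij : ℕ × ℕ, ‖f ij.2 (B (e ij.1))‖ ^ q) ^ (1 / q) := by
  have hpq' : p.HolderConjugate q := ⟨by rw [inv_one, ← one_div, ← one_div]; exact hpq, by linarith, by linarith⟩
  set a : ℕ × ℕ → ℝ := fun ij => ‖f ij.2 (A (e ij.1))‖ with ha
  set b : ℕ × ℕ → ℝ := fun ij => ‖f ij.1 (B (e ij.2))‖ with hb
  -- summability of b^q via the swap equivalence
  have hswap : (fun ij : ℕ × ℕ => b ij ^ q)
      = (fun ij : ℕ × ℕ => ‖f ij.2 (B (e ij.1))‖ ^ q) ∘ (Equiv.prodComm ℕ ℕ) := rfl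
  have hBsum : Summable fun ij : ℕ × ℕ => b ij ^ q := by
    rw [hswap, Equiv.summable_iff]; exact hB
  have hBtsum : (∑' ij : ℕ × ℕ, b ij ^ q)
      = ∑' ij : ℕ × ℕ, ‖f ij.2 (B (e ij.1))‖ ^ q := by
    rw [hswap]; exact (Equiv.prodComm ℕ ℕ).tsum_eq (fun ij : ℕ × ℕ => ‖f ij.2 (B (e ij.1))‖ ^ q)
  -- Hölder
  obtain ⟨hmulsum, hholder⟩ :=
    Real.summable_and_inner_le_Lp_mul_Lq_tsum_of_nonneg hpq' (fun ij => norm_nonneg _)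
      (fun ij => norm_nonneg _) hA hBsum
  -- expansion of the diagonal entries
  have hdiag : ∀ i, HasSum (fun j => f j (A (e i)) * f i (B (e j))) (f i (B (A (e i)))) :=
    fun i => hexp (A (e i)) ((f i).comp B)
  have hab : ∀ ij : ℕ × ℕ, (0:ℝ) ≤ a ij * b ij :=
    fun ij => mul_nonneg (norm_nonneg _) (norm_nonneg _)
  obtain ⟨hfac, hrow⟩ := (summable_prod_of_nonneg hab).mp hmulsum
  -- pointwise bound
  have hle : ∀ i, ‖f i (B (A (e i)))‖ ≤ ∑' j, a (i, j) * b (i, j) := by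
    intro i
    have h1 : ‖f i (B (A (e i)))‖ ≤ ∑' j, ‖f j (A (e i)) * f i (B (e j))‖ :=
      norm_tsum_le_tsum_norm (by
        simpa [norm_mul] using hfac i) |>.trans_eq' (by
          rw [(hdiag i).tsum_eq])
    simpa [norm_mul] using h1
  have hsum1 : Summable (fun i => ‖f i (B (A (e i)))‖) :=
    Summable.of_nonneg_of_le (fun i => norm_nonneg _) hle hrow
  refine ⟨hsum1, ?_⟩
  calc ‖∑' i, f i (B (A (e i)))‖ ≤ ∑' i, ‖f i (B (A (e i)))‖ :=
        norm_tsum_le_tsum_norm hsum1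
    _ ≤ ∑' i, ∑' j, a (i, j) * b (i, j) := Summable.tsum_le_tsum hle hsum1 hrow
    _ = ∑' ij : ℕ × ℕ, a ij * b ij := (Summable.tsum_prod' hmulsum hfac).symm
    _ ≤ (∑' ij : ℕ × ℕ, a ij ^ p) ^ (1 / p) * (∑' ij : ℕ × ℕ, b ij ^ q) ^ (1 / q) := hholder
    _ = _ := by rw [hBtsum]
end

section
/- Let E be a Banach space satisfying the B-condition, p ∈ (1,∞), 1/p + 1/q = 1, A ∈ σ_p(E) and B ∈ σ_q(E), and {e_j, f_j} a biorthonormal basis system in E × E*. Then ∑_{i=1}^∞ ⟨A e_i, B* f_i⟩ = ∑_{i=1}^∞ ⟨B e_i, A* f_i⟩; that is, the bilinear trace Tr(A,B) is symmetric in A and B. -/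
/-- Symmetry of the bilinear trace: `Tr(A,B) = ∑ ⟨A e_i, B* f_i⟩ = ∑ ⟨B e_i, A* f_i⟩`
for `A ∈ σ_p(E)`, `B ∈ σ_q(E)`, `1/p + 1/q = 1`, in a Banach space satisfying the
B-condition. Here `⟨A e_i, B* f_i⟩ = f_i (B (A e_i))`. -/
theorem stmt5 {E : Type*} [NormedAddCommGroup E] [NormedSpace ℂ E]
    (e : ℕ → E) (f : ℕ → StrongDual ℂ E)
    (hbi : ∀ i j, f i (e j) = if i = j then 1 else 0)
    (hne : ∀ j, ‖e j‖ = 1) (hnf : ∀ j, ‖f j‖ = 1)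
    (p q C : ℝ) (hp : 1 < p) (hq : 1 < q) (hpq : 1 / p + 1 / q = 1) (hC : 0 < C)
    -- B-condition:
    (hexp : ∀ (u : E) (g : StrongDual ℂ E),
      HasSum (fun j => f j u * g (e j)) (g u))
    (hBcond : ∀ u : E, ‖u‖ ^ p ≤ C * ∑' j, ‖f j u‖ ^ p)
    (A B : E →L[ℂ] E)
    (hA : Summable fun ij : ℕ × ℕ => ‖f ij.2 (A (e ij.1))‖ ^ p)
    (hB : Summable fun ij : ℕ × ℕ => ‖f ij.2 (B (e ij.1))‖ ^ q) :
    ∑' i, f i (B (A (e i))) = ∑' i, f i (A (B (e i))) := by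
  have hpq' : Real.HolderConjugate p q :=
    Real.holderConjugate_iff.mpr ⟨hp, by rw [← one_div, ← one_div]; exact hpq⟩
  set F : ℕ × ℕ → ℂ := fun ij => f ij.2 (A (e ij.1)) * f ij.1 (B (e ij.2)) with hF
  -- summability of F
  have hFsum : Summable F := by
    apply Summable.of_norm
    refine Summable.of_nonneg_of_le (fun ij => norm_nonneg _) (fun ij => ?_)
      ((hA.div_const p).add ((hB.prod_symm).div_const q))
    show ‖F ij‖ ≤ ‖f ij.2 (A (e ij.1))‖ ^ p / p + ‖f ij.1 (B (e ij.2))‖ ^ q / q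
    rw [hF, norm_mul]
    exact Real.young_inequality_of_nonneg (norm_nonneg _) (norm_nonneg _) hpq'
  -- row sums
  have h1 : ∀ i, HasSum (fun j => F (i, j)) (f i (B (A (e i)))) := by
    intro i
    simpa [hF] using hexp (A (e i)) ((f i).comp B)
  have h2 : ∀ j, HasSum (fun i => F (i, j)) (f j (A (B (e j)))) := by
    intro j
    have := hexp (B (e j)) ((f j).comp A)
    simpa [hF, mul_comm] using this
  have e1 : ∑' i, f i (B (A (e i))) = ∑' ij : ℕ × ℕ, F ij := by
    rw [Summable.tsum_prod' hFsum fun i => (h1 i).summable]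
    exact tsum_congr fun i => (h1 i).tsum_eq.symm
  have e2 : ∑' i, f i (A (B (e i))) = ∑' ij : ℕ × ℕ, F ij := by
    have hswap : Summable fun ij : ℕ × ℕ => F ij.swap := hFsum.prod_symm
    have : ∑' ij : ℕ × ℕ, F ij = ∑' ij : ℕ × ℕ, F ij.swap :=
      ((Equiv.prodComm ℕ ℕ).tsum_eq F).symm
    rw [this, Summable.tsum_prod' hswap fun j => (h2 j).summable]
    exact tsum_congr fun j => (h2 j).tsum_eq.symm
  rw [e1, e2]
end
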